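/- arXiv:1912.05497 — 2 statements merged into one kernel-verified Lean document; each statement's English description precedes it below -/
import Mathlib

section
/- Let $(\eta_k)_{k\ge 0}$ be a sequence of reals with $0<\eta_k\le 1$ for all $k$, satisfying $\eta_{k+1}\le c(\eta_k+b)^{\gamma}$ for all $k$, where $0<\gamma<1$, $b>0$, $c\ge 1$ are constants. Then $\eta_k\le C(\eta_0+b)^{\gamma^k}$ for all $k$, with $C=(2c)^{1/(1-\gamma)}$. -/
theorem iteration_lemma (η : ℕ → ℝ) (γ b c : ℝ)
    (hγ0 : 0 < γ) (hγ1 : γ < 1) (hb : 0 < b) (hc : 1 ≤ c)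
    (hpos : ∀ k, 0 < η k) (hle : ∀ k, η k ≤ 1)
    (hrec : ∀ k, η (k + 1) ≤ c * (η k + b) ^ γ) :
    ∀ k, η k ≤ (2 * c) ^ (1 / (1 - γ)) * (η 0 + b) ^ (γ ^ k) := by
  set C : ℝ := (2 * c) ^ (1 / (1 - γ)) with hCdef
  have h2c : (1:ℝ) ≤ 2 * c := by linarith
  have h2cpos : (0:ℝ) < 2 * c := by linarith
  have h1γ : (0:ℝ) < 1 - γ := by linarith
  have hexp : (0:ℝ) ≤ 1 / (1 - γ) := by positivity
  have hC1 : (1:ℝ) ≤ C := Real.one_le_rpow h2c hexp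
  have hob : 0 < η 0 + b := by linarith [hpos 0]
  have key2 : c * (2 * C) ^ γ ≤ C := by
    have hCγ : C ^ γ = (2 * c) ^ (γ / (1 - γ)) := by
      rw [hCdef, ← Real.rpow_mul h2cpos.le]
      congr 1; ring
    have hCsplit : C = (2 * c) * (2 * c) ^ (γ / (1 - γ)) := by
      rw [hCdef]
      have e1 : 1 / (1 - γ) = 1 + γ / (1 - γ) := by
        field_simp
        ring
      rw [e1, Real.rpow_add h2cpos, Real.rpow_one]
    have h2γ : (2:ℝ) ^ γ ≤ 2 := by
      calc (2:ℝ) ^ γ ≤ (2:ℝ) ^ (1:ℝ) :=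
            Real.rpow_le_rpow_of_exponent_le (by norm_num) hγ1.le
        _ = 2 := Real.rpow_one 2
    have hmul : (2 * C) ^ γ = 2 ^ γ * C ^ γ :=
      Real.mul_rpow (by norm_num) (by linarith)
    have hCγ0 : 0 ≤ C ^ γ := Real.rpow_nonneg (by linarith) _
    rw [hmul, hCγ]
    rw [hCsplit]
    rw [← hCγ] at *
    nlinarith
  intro k
  induction k with
  | zero =>
    simp only [pow_zero, Real.rpow_one]
    nlinarith [hpos 0, hle 0]
  | succ k ih =>
    have hγk1 : γ ^ k ≤ 1 := pow_le_one₀ hγ0.le hγ1.le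
    have hγk0 : 0 < γ ^ k := pow_pos hγ0 k
    by_cases h1 : 1 ≤ η 0 + b
    · have : (1:ℝ) ≤ (η 0 + b) ^ (γ ^ (k+1)) :=
        Real.one_le_rpow h1 (by positivity)
      nlinarith [hle (k+1)]
    · push_neg at h1
      have hX0 : 0 ≤ (η 0 + b) ^ (γ ^ k) := Real.rpow_nonneg hob.le _
      have hbX : b ≤ (η 0 + b) ^ (γ ^ k) := by
        calc b ≤ η 0 + b := by linarith [hpos 0]
          _ = (η 0 + b) ^ (1:ℝ) := (Real.rpow_one _).symm
          _ ≤ (η 0 + b) ^ (γ ^ k) :=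
              Real.rpow_le_rpow_of_exponent_ge hob h1.le hγk1
      have key : η k + b ≤ 2 * C * (η 0 + b) ^ (γ ^ k) := by nlinarith
      have hηb0 : 0 ≤ η k + b := by linarith [hpos k]
      calc η (k+1) ≤ c * (η k + b) ^ γ := hrec k
        _ ≤ c * (2 * C * (η 0 + b) ^ (γ ^ k)) ^ γ := by
            have := Real.rpow_le_rpow hηb0 key hγ0.le
            nlinarith
        _ = c * (2 * C) ^ γ * ((η 0 + b) ^ (γ ^ k)) ^ γ := by
            rw [Real.mul_rpow (by nlinarith) hX0]; ring
        _ = c * (2 * C) ^ γ * (η 0 + b) ^ (γ ^ (k+1)) := by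
            rw [← Real.rpow_natCast, ← Real.rpow_mul hob.le, Real.rpow_natCast, ← pow_succ]
        _ ≤ C * (η 0 + b) ^ (γ ^ (k+1)) := by
            have : 0 ≤ (η 0 + b) ^ (γ ^ (k+1)) := Real.rpow_nonneg hob.le _
            nlinarith
end

section
/- Let $\alpha,\beta,c,\overline{a},\overline{s}>0$ be constants. There exists a constant $C>0$, depending only on $\alpha,\beta,c,\overline{a},\overline{s}$, such that: for any $a\in(0,\overline{a}]$ and $b>0$, if $a\le s^{-\alpha}+e^{cs}b^{\beta}$ for all $s\ge \overline{s}$, then $a\le C(|\ln b|^{-\alpha}+b)$. -/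
theorem log_stability_lemma (α β c abar sbar : ℝ)
    (hα : 0 < α) (hβ : 0 < β) (hc : 0 < c) (habar : 0 < abar) (hsbar : 0 < sbar) :
    ∃ C > (0 : ℝ), ∀ a b : ℝ, 0 < a → a ≤ abar → 0 < b →
      (∀ s : ℝ, sbar ≤ s → a ≤ s ^ (-α) + Real.exp (c * s) * b ^ β) →
      a ≤ C * (|Real.log b| ^ (-α) + b) := by
  set n : ℕ := ⌈α⌉₊ with hn
  set T : ℝ := max (2 * c * sbar / β) 1 with hT
  set b0 : ℝ := Real.exp (-T) with hb0
  have hb0pos : 0 < b0 := Real.exp_pos _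
  have hq : (0:ℝ) < β / (2 * c) := by positivity
  set K : ℝ := (β / (2 * c)) ^ (-α) with hK
  have hKpos : 0 < K := Real.rpow_pos_of_pos hq _
  set M : ℝ := (n.factorial : ℝ) * (2 / β) ^ n with hM
  have hMpos : 0 < M := by positivity
  refine ⟨max (K + M) (abar / b0), lt_max_of_lt_left (by positivity), ?_⟩
  intro a b ha hab hb hineq
  set C : ℝ := max (K + M) (abar / b0) with hC
  have habs : (0:ℝ) ≤ |Real.log b| ^ (-α) := Real.rpow_nonneg (abs_nonneg _) _
  rcases le_or_gt b0 b with hbig | hsmall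
  · have h1 : a ≤ abar / b0 * b := by
      calc a ≤ abar := hab
      _ = abar / b0 * b0 := by field_simp
      _ ≤ abar / b0 * b := by
        apply mul_le_mul_of_nonneg_left hbig (by positivity)
    have h2 : abar / b0 * b ≤ C * (|Real.log b| ^ (-α) + b) := by
      have hCb : abar / b0 ≤ C := le_max_right _ _
      nlinarith [mul_le_mul_of_nonneg_right hCb hb.le,
        mul_nonneg (le_trans (by positivity) hCb) habs]
    linarith
  · -- small b case
    set t : ℝ := -Real.log b with ht
    have hlog : Real.log b < -T := by
      have := Real.log_lt_log hb hsmall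
      rwa [hb0, Real.log_exp] at this
    have hT1 : (1:ℝ) ≤ T := le_max_right _ _
    have ht1 : 1 ≤ t := by simp only [ht]; linarith
    have htpos : 0 < t := lt_of_lt_of_le one_pos ht1
    have hTt : T ≤ t := by simp only [ht]; linarith
    have htT : 2 * c * sbar / β ≤ t := by
      have h5 : 2 * c * sbar / β ≤ T := by rw [hT]; exact le_max_left _ _
      exact h5.trans hTt
    have habsval : |Real.log b| = t := by
      rw [abs_of_neg (by linarith : Real.log b < 0)]
    set s : ℝ := β / (2 * c) * t with hs
    have hssbar : sbar ≤ s := by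
      have : β / (2 * c) * (2 * c * sbar / β) ≤ s := by
        apply mul_le_mul_of_nonneg_left htT hq.le
      have heq : β / (2 * c) * (2 * c * sbar / β) = sbar := by field_simp
      rw [heq] at this; linarith
    have key := hineq s hssbar
    -- compute exp(c*s) * b^β = exp(-(β/2)*t)
    have hcs : c * s = β / 2 * t := by rw [hs]; field_simp
    have hbβ : b ^ β = Real.exp (-(β * t)) := by
      rw [Real.rpow_def_of_pos hb, ht]; ring_nf
    have hprod : Real.exp (c * s) * b ^ β = Real.exp (-(β / 2 * t)) := by
      rw [hcs, hbβ, ← Real.exp_add]; ring_nf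
    -- s^(-α) = K * t^(-α)
    have hsα : s ^ (-α) = K * t ^ (-α) := by
      rw [hs, Real.mul_rpow hq.le htpos.le, hK]
    -- exp(-(β/2)*t) ≤ M * t^(-α)
    have htα : t ^ α ≤ M * Real.exp (β / 2 * t) := by
      have h1 : t ^ α ≤ t ^ (n:ℝ) :=
        Real.rpow_le_rpow_of_exponent_le ht1 (Nat.le_ceil α)
      rw [Real.rpow_natCast] at h1
      have h2 : (β / 2 * t) ^ n / (n.factorial : ℝ) ≤ Real.exp (β / 2 * t) :=
        Real.pow_div_factorial_le_exp (x := β / 2 * t) (by positivity) n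
      have h3 : t ^ n = (2 / β) ^ n * (β / 2 * t) ^ n := by
        rw [← mul_pow]; congr 1; field_simp
      have hfac : (0:ℝ) < (n.factorial : ℝ) := by positivity
      calc t ^ α ≤ t ^ n := h1
        _ = (2 / β) ^ n * (β / 2 * t) ^ n := h3
        _ ≤ (2 / β) ^ n * ((n.factorial : ℝ) * Real.exp (β / 2 * t)) := by
            apply mul_le_mul_of_nonneg_left _ (by positivity)
            rw [div_le_iff₀ hfac] at h2; linarith [h2]
        _ = M * Real.exp (β / 2 * t) := by rw [hM]; ring
    have hexp : Real.exp (-(β / 2 * t)) ≤ M * t ^ (-α) := by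
      rw [Real.exp_neg, Real.rpow_neg htpos.le]
      rw [inv_le_iff_one_le_mul₀' (Real.exp_pos _)]
      have htαpos : 0 < t ^ α := Real.rpow_pos_of_pos htpos _
      have h4 : t ^ α * (t ^ α)⁻¹ ≤ M * Real.exp (β / 2 * t) * (t ^ α)⁻¹ :=
        mul_le_mul_of_nonneg_right htα (by positivity)
      rw [mul_inv_cancel₀ (ne_of_gt htαpos)] at h4
      calc (1:ℝ) ≤ M * Real.exp (β / 2 * t) * (t ^ α)⁻¹ := h4
        _ = Real.exp (β / 2 * t) * (M * (t ^ α)⁻¹) := by ring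
    have htαneg : (0:ℝ) < t ^ (-α) := Real.rpow_pos_of_pos htpos _
    have hfinal : a ≤ (K + M) * t ^ (-α) := by
      rw [hprod, hsα] at key
      linarith
    have hCKM : K + M ≤ C := le_max_left _ _
    calc a ≤ (K + M) * t ^ (-α) := hfinal
      _ ≤ C * t ^ (-α) := mul_le_mul_of_nonneg_right hCKM htαneg.le
      _ ≤ C * (t ^ (-α) + b) := by
          have hCpos : 0 < C := lt_of_lt_of_le (by positivity) hCKM
          nlinarith
      _ = C * (|Real.log b| ^ (-α) + b) := by rw [habsval]
end
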